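/- arXiv:1804.01172 — 8 statements merged into one kernel-verified Lean document; each statement's English description precedes it below -/
import Mathlib

section
/- Let n be a natural number and let A, B, C, D be n×n matrices with entries in {±1} such that (1) A, B, C, and D are symmetric, (2) A, B, C, and D commute pairwise, and (3) A² + B² + C² + D² = 4n·Iₙ, where Iₙ is the identity matrix of order n. Then the 4n×4n block matrix H = [[A, B, C, D], [−B, A, −D, C], [−C, D, A, −B], [−D, −C, B, A]] is a Hadamard matrix of order 4n, i.e., H has entries in {±1} and H·Hᵀ = 4n·I₄ₙ. -/
open Matrix

theorem williamson_construction_hadamard (n : ℕ)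
    (A B C D : Matrix (Fin n) (Fin n) ℤ)
    (hA : ∀ i j, A i j = 1 ∨ A i j = -1) (hB : ∀ i j, B i j = 1 ∨ B i j = -1)
    (hC : ∀ i j, C i j = 1 ∨ C i j = -1) (hD : ∀ i j, D i j = 1 ∨ D i j = -1)
    (hAs : Aᵀ = A) (hBs : Bᵀ = B) (hCs : Cᵀ = C) (hDs : Dᵀ = D)
    (hAB : A * B = B * A) (hAC : A * C = C * A) (hAD : A * D = D * A)
    (hBC : B * C = C * B) (hBD : B * D = D * B) (hCD : C * D = D * C)
    (hsum : A ^ 2 + B ^ 2 + C ^ 2 + D ^ 2 = (4 * (n : ℤ)) • (1 : Matrix (Fin n) (Fin n) ℤ)) :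
    let H : Matrix ((Fin n ⊕ Fin n) ⊕ (Fin n ⊕ Fin n)) ((Fin n ⊕ Fin n) ⊕ (Fin n ⊕ Fin n)) ℤ :=
      Matrix.fromBlocks
        (Matrix.fromBlocks A B (-B) A)
        (Matrix.fromBlocks C D (-D) C)
        (Matrix.fromBlocks (-C) D (-D) (-C))
        (Matrix.fromBlocks A (-B) B A)
    (∀ i j, H i j = 1 ∨ H i j = -1) ∧
      H * Hᵀ = (4 * (n : ℤ)) • (1 : Matrix ((Fin n ⊕ Fin n) ⊕ (Fin n ⊕ Fin n)) ((Fin n ⊕ Fin n) ⊕ (Fin n ⊕ Fin n)) ℤ) := by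
  intro H
  have negpm : ∀ x : ℤ, (x = 1 ∨ x = -1) → (-x = 1 ∨ -x = -1) := by omega
  constructor
  · rintro ((i|i)|(i|i)) ((j|j)|(j|j)) <;>
      simp only [H, Matrix.fromBlocks_apply₁₁, Matrix.fromBlocks_apply₁₂,
        Matrix.fromBlocks_apply₂₁, Matrix.fromBlocks_apply₂₂, Matrix.neg_apply] <;>
      first
        | exact hA _ _ | exact hB _ _ | exact hC _ _ | exact hD _ _
        | exact negpm _ (hA _ _) | exact negpm _ (hB _ _)
        | exact negpm _ (hC _ _) | exact negpm _ (hD _ _)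
  · show _ = _
    simp only [H, Matrix.fromBlocks_transpose, Matrix.fromBlocks_multiply,
      Matrix.transpose_neg, hAs, hBs, hCs, hDs, ← Matrix.fromBlocks_one,
      Matrix.fromBlocks_add, Matrix.fromBlocks_smul, smul_zero,
      ← Matrix.fromBlocks_zero, Matrix.fromBlocks_inj]
    have hsum' : A*A + B*B + (C*C + D*D) = (4*(n:ℤ)) • (1 : Matrix (Fin n) (Fin n) ℤ) := by
      rw [← hsum, pow_two, pow_two, pow_two, pow_two]; abel
    and_intros
    all_goals simp only [Matrix.mul_neg, Matrix.neg_mul, neg_neg, hAB, hAC, hAD, hBC, hBD, hCD,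
      ← hsum']
    all_goals abel
end

section
/- Let A, B, C, D be symmetric sequences of length n with entries in {±1}, and let Mᴬ, Mᴮ, Mᶜ, Mᴰ be the circulant matrices whose first rows are A, B, C, D respectively. Then Mᴬ² + Mᴮ² + Mᶜ² + Mᴰ² = 4n·Iₙ if and only if PAF_A(s) + PAF_B(s) + PAF_C(s) + PAF_D(s) = 0 for all s = 1, …, ⌊n/2⌋. -/
/-- The periodic autocorrelation function of the length-`n` sequence `a`. -/
def paf (n : ℕ) (a : ℕ → ℤ) (s : ℕ) : ℤ :=
  ∑ k ∈ Finset.range n, a k * a ((k + s) % n)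

/-- `a` is a symmetric sequence of length `n`: `aᵢ = a_{n-i}` for `1 ≤ i < n`. -/
def SymmSeq (n : ℕ) (a : ℕ → ℤ) : Prop := ∀ i, 1 ≤ i → i < n → a i = a (n - i)

/-- All entries of the length-`n` sequence `a` are `±1`. -/
def PMOne (n : ℕ) (a : ℕ → ℤ) : Prop := ∀ i < n, a i = 1 ∨ a i = -1

/-- The circulant matrix whose first row is the length-`n` sequence `a`:
its `(i,j)` entry is `a_{(j-i) mod n}`. -/
def circMat (n : ℕ) (a : ℕ → ℤ) : Matrix (Fin n) (Fin n) ℤ :=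
  fun i j => a ((n + j.val - i.val) % n)

lemma sum_shift (n s : ℕ) (f : ℕ → ℤ) :
    ∑ k ∈ Finset.range n, f ((k + s) % n) = ∑ k ∈ Finset.range n, f k := by
  rcases Nat.eq_zero_or_pos n with h | h
  · simp [h]
  haveI : NeZero n := ⟨h.ne'⟩
  rw [← Fin.sum_univ_eq_sum_range, ← Fin.sum_univ_eq_sum_range]
  have key : ∀ k : Fin n, f ((k.val + s) % n) = (fun m : Fin n => f m.val) (k + (Fin.ofNat n s)) := by
    intro k
    simp only [Fin.add_def, Fin.ofNat]
    rw [Nat.add_mod_mod]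
  simp only [key]
  exact Equiv.sum_comp (Equiv.addRight (Fin.ofNat n s)) (fun m : Fin n => f m.val)

/-- symmetry swap: `a((n+x-y) % n) = a((n+y-x) % n)` for `x, y < n`. -/
lemma symm_swap {n : ℕ} {a : ℕ → ℤ} (hs : SymmSeq n a) {x y : ℕ} (hx : x < n) (hy : y < n) :
    a ((n + x - y) % n) = a ((n + y - x) % n) := by
  rcases lt_trichotomy x y with h | h | h
  · have e1 : (n + x - y) % n = n + x - y := Nat.mod_eq_of_lt (by omega)
    have e2 : (n + y - x) % n = y - x := by
      rw [show n + y - x = (y - x) + n by omega, Nat.add_mod_right, Nat.mod_eq_of_lt (by omega)]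
    rw [e1, e2, hs (y - x) (by omega) (by omega)]
    congr 1; omega
  · rw [h]
  · have e1 : (n + x - y) % n = x - y := by
      rw [show n + x - y = (x - y) + n by omega, Nat.add_mod_right, Nat.mod_eq_of_lt (by omega)]
    have e2 : (n + y - x) % n = n + y - x := Nat.mod_eq_of_lt (by omega)
    rw [e1, e2, hs (x - y) (by omega) (by omega)]
    congr 1; omega

lemma key1 (n k i j : ℕ) (hk : k < n) (hi : i < n) (hj : j < n) :
    (n + (k + j) % n - i) % n = (k + (n + j - i) % n) % n := by
  rcases Nat.lt_or_ge (k + j) n with h | h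
  · have h1 : (k + j) % n = k + j := Nat.mod_eq_of_lt h
    rcases le_or_gt i j with h2 | h2
    · have h3 : (n + j - i) % n = j - i := by
        rw [show n + j - i = (j - i) + n by omega, Nat.add_mod_right, Nat.mod_eq_of_lt (by omega)]
      rw [h1, h3, show n + (k + j) - i = (k + (j - i)) + n by omega, Nat.add_mod_right]
    · have h3 : (n + j - i) % n = n + j - i := Nat.mod_eq_of_lt (by omega)
      rw [h1, h3]; congr 1; omega
  · have h1 : (k + j) % n = k + j - n := by
      rw [Nat.mod_eq_sub_mod h, Nat.mod_eq_of_lt (by omega)]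
    rcases le_or_gt i j with h2 | h2
    · have h3 : (n + j - i) % n = j - i := by
        rw [show n + j - i = (j - i) + n by omega, Nat.add_mod_right, Nat.mod_eq_of_lt (by omega)]
      rw [h1, h3]; congr 1; omega
    · have h3 : (n + j - i) % n = n + j - i := Nat.mod_eq_of_lt (by omega)
      rw [h1, h3, show k + (n + j - i) = (n + (k + j - n) - i) + n by omega, Nat.add_mod_right]

lemma key2 (n k j : ℕ) (hk : k < n) (hj : j < n) :
    (n + (k + j) % n - j) % n = k := by
  rcases Nat.lt_or_ge (k + j) n with h | h
  · rw [Nat.mod_eq_of_lt h, show n + (k + j) - j = k + n by omega, Nat.add_mod_right,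
      Nat.mod_eq_of_lt hk]
  · have h1 : (k + j) % n = k + j - n := by
      rw [Nat.mod_eq_sub_mod h, Nat.mod_eq_of_lt (by omega)]
    rw [h1, show n + (k + j - n) - j = k by omega, Nat.mod_eq_of_lt hk]

/-- the square of a symmetric circulant matrix has entries given by the PAF. -/
lemma sq_entry {n : ℕ} {a : ℕ → ℤ} (hs : SymmSeq n a) (i j : Fin n) :
    (circMat n a ^ 2) i j = paf n a ((n + j.val - i.val) % n) := by
  have hn : 0 < n := i.pos
  rw [sq, Matrix.mul_apply]
  simp only [circMat]
  have step1 : ∀ k : Fin n,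
      a ((n + k.val - i.val) % n) * a ((n + j.val - k.val) % n)
        = a ((n + k.val - i.val) % n) * a ((n + k.val - j.val) % n) := by
    intro k
    rw [symm_swap hs j.isLt k.isLt]
  rw [Finset.sum_congr rfl (fun k _ => step1 k), Fin.sum_univ_eq_sum_range
    (fun k => a ((n + k - i.val) % n) * a ((n + k - j.val) % n)) n]
  have := sum_shift n j.val
    (fun m => a ((n + m % n - i.val) % n) * a ((n + m % n - j.val) % n))
  rw [show (∑ k ∈ Finset.range n, a ((n + k - i.val) % n) * a ((n + k - j.val) % n))
      = ∑ k ∈ Finset.range n,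
        (fun m => a ((n + m % n - i.val) % n) * a ((n + m % n - j.val) % n)) k from
    Finset.sum_congr rfl (fun k hk => by
      simp only [Nat.mod_eq_of_lt (Finset.mem_range.mp hk)]), ← this]
  unfold paf
  apply Finset.sum_congr rfl
  intro k hk
  have hk' : k < n := Finset.mem_range.mp hk
  simp only [Nat.mod_mod_of_dvd _ dvd_rfl]
  rw [key1 n k i.val j.val hk' i.isLt j.isLt, key2 n k j.val hk' j.isLt, mul_comm]

lemma paf_symm (n : ℕ) (a : ℕ → ℤ) (s : ℕ) (h1 : 1 ≤ s) (h2 : s < n) :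
    paf n a (n - s) = paf n a s := by
  unfold paf
  have e : (∑ k ∈ Finset.range n, a k * a ((k + (n - s)) % n))
      = ∑ k ∈ Finset.range n, (fun m => a (m % n) * a ((m + (n - s)) % n)) k :=
    Finset.sum_congr rfl (fun k hk => by
      simp only [Nat.mod_eq_of_lt (Finset.mem_range.mp hk)])
  rw [e, ← sum_shift n s (fun m => a (m % n) * a ((m + (n - s)) % n))]
  apply Finset.sum_congr rfl
  intro k hk
  have hk' : k < n := Finset.mem_range.mp hk
  rw [Nat.mod_mod_of_dvd _ dvd_rfl, Nat.mod_add_mod,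
    show k + s + (n - s) = k + n by omega, Nat.add_mod_right, Nat.mod_eq_of_lt hk', mul_comm]

lemma paf_zero {n : ℕ} {a : ℕ → ℤ} (hp : PMOne n a) : paf n a 0 = n := by
  unfold paf
  rw [Finset.sum_congr rfl (fun k hk => show a k * a ((k + 0) % n) = 1 by
    have hk' : k < n := Finset.mem_range.mp hk
    rw [Nat.add_zero, Nat.mod_eq_of_lt hk']
    rcases hp k hk' with h | h <;> rw [h] <;> norm_num)]
  simp

theorem circulant_squares_iff_paf (n : ℕ) (a b c d : ℕ → ℤ)
    (hsa : SymmSeq n a) (hsb : SymmSeq n b) (hsc : SymmSeq n c) (hsd : SymmSeq n d)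
    (hpa : PMOne n a) (hpb : PMOne n b) (hpc : PMOne n c) (hpd : PMOne n d) :
    circMat n a ^ 2 + circMat n b ^ 2 + circMat n c ^ 2 + circMat n d ^ 2 =
        (4 * (n : ℤ)) • (1 : Matrix (Fin n) (Fin n) ℤ) ↔
      ∀ s, 1 ≤ s → s ≤ n / 2 → paf n a s + paf n b s + paf n c s + paf n d s = 0 := by
  constructor
  · intro H s hs1 hs2
    have hn2 : 2 ≤ n := by omega
    have hsn : s < n := by omega
    have hE := congrFun (congrFun H ⟨0, by omega⟩) ⟨s, hsn⟩
    simp only [Matrix.add_apply, Matrix.smul_apply, Matrix.one_apply] at hE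
    rw [sq_entry hsa, sq_entry hsb, sq_entry hsc, sq_entry hsd] at hE
    have hne : (⟨0, by omega⟩ : Fin n) ≠ ⟨s, hsn⟩ := by
      intro h
      have h0 : (0 : ℕ) = s := congrArg Fin.val h
      omega
    rw [if_neg hne, smul_zero] at hE
    simp only [Fin.val_mk] at hE
    rw [show n + s - 0 = s + n by omega, Nat.add_mod_right, Nat.mod_eq_of_lt hsn] at hE
    exact hE
  · intro H
    have key : ∀ t, 1 ≤ t → t < n →
        paf n a t + paf n b t + paf n c t + paf n d t = 0 := by
      intro t h1 h2
      rcases le_or_gt t (n / 2) with h | h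
      · exact H t h1 h
      · have h3 : 1 ≤ n - t := by omega
        have h4 : n - t ≤ n / 2 := by omega
        have h5 : n - t < n := by omega
        have ea := paf_symm n a (n - t) h3 h5
        have eb := paf_symm n b (n - t) h3 h5
        have ec := paf_symm n c (n - t) h3 h5
        have ed := paf_symm n d (n - t) h3 h5
        rw [show n - (n - t) = t by omega] at ea eb ec ed
        rw [ea, eb, ec, ed]
        exact H (n - t) h3 h4
    ext i j
    simp only [Matrix.add_apply, Matrix.smul_apply, Matrix.one_apply]
    rw [sq_entry hsa, sq_entry hsb, sq_entry hsc, sq_entry hsd]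
    by_cases hij : i = j
    · subst hij
      rw [if_pos rfl, show (n + i.val - i.val) % n = 0 by
        rw [show n + i.val - i.val = n by omega, Nat.mod_self],
        paf_zero hpa, paf_zero hpb, paf_zero hpc, paf_zero hpd, smul_eq_mul, mul_one]
      ring
    · rw [if_neg hij, smul_zero]
      have hvne : i.val ≠ j.val := fun h => hij (Fin.ext h)
      have ht1 : 1 ≤ (n + j.val - i.val) % n := by
        rcases le_or_gt i.val j.val with h | h
        · rw [show n + j.val - i.val = (j.val - i.val) + n by omega, Nat.add_mod_right,
            Nat.mod_eq_of_lt (by omega)]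
          omega
        · rw [Nat.mod_eq_of_lt (by omega)]
          omega
      exact key _ ht1 (Nat.mod_lt _ i.pos)
end

section
/- If A, B, C, D is a Williamson sequence of odd order n, then a_i·b_i·c_i·d_i = −a₀·b₀·c₀·d₀ for all indices i with 1 ≤ i < n/2. -/
/-- `a,b,c,d` are Williamson sequences of order `n`. -/
def IsWilliamson (n : ℕ) (a b c d : ℕ → ℤ) : Prop :=
  SymmSeq n a ∧ SymmSeq n b ∧ SymmSeq n c ∧ SymmSeq n d ∧
  PMOne n a ∧ PMOne n b ∧ PMOne n c ∧ PMOne n d ∧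
  ∀ s, 1 ≤ s → s ≤ n / 2 → paf n a s + paf n b s + paf n c s + paf n d s = 0

lemma sum_zmod (n : ℕ) [NeZero n] (a : ℕ → ℤ) :
    ∑ k ∈ Finset.range n, a k = ∑ x : ZMod n, a x.val := by
  refine Finset.sum_nbij' (fun k => (k : ZMod n)) (fun x => x.val) ?_ ?_ ?_ ?_ ?_
  · intro k _; exact Finset.mem_univ _
  · intro x _; exact Finset.mem_range.2 (ZMod.val_lt x)
  · intro k hk; exact ZMod.val_cast_of_lt (Finset.mem_range.1 hk)
  · intro x _; exact ZMod.natCast_zmod_val x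
  · intro k hk; rw [ZMod.val_cast_of_lt (Finset.mem_range.1 hk)]

lemma paf_zmod (n s : ℕ) [NeZero n] (a : ℕ → ℤ) :
    paf n a s = ∑ x : ZMod n, a x.val * a (x + (s : ZMod n)).val := by
  unfold paf
  refine Finset.sum_nbij' (fun k => (k : ZMod n)) (fun x => x.val) ?_ ?_ ?_ ?_ ?_
  · intro k _; exact Finset.mem_univ _
  · intro x _; exact Finset.mem_range.2 (ZMod.val_lt x)
  · intro k hk; exact ZMod.val_cast_of_lt (Finset.mem_range.1 hk)
  · intro x _; exact ZMod.natCast_zmod_val x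
  · intro k hk
    rw [ZMod.val_cast_of_lt (Finset.mem_range.1 hk), ← Nat.cast_add, ZMod.val_natCast]

lemma keyB (n s : ℕ) [NeZero n] (hodd : Odd n) (a : ℕ → ℤ)
    (hsym : ∀ x : ZMod n, a (-x).val = a x.val)
    (hpm : ∀ x : ZMod n, a x.val = 1 ∨ a x.val = -1)
    (z : ZMod n) (hz : 2 * z + (s : ZMod n) = 0) :
    (8 : ℤ) ∣ paf n a s -
      (2 * (∑ k ∈ Finset.range n, a k) - n + 2 - 2 * a z.val) := by
  have hu : IsUnit (2 : ZMod n) := by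
    rw [show ((2 : ZMod n)) = ((2 : ℕ) : ZMod n) by push_cast; ring,
      ZMod.isUnit_iff_coprime]
    exact Nat.coprime_two_left.2 hodd
  have huniq : ∀ x : ZMod n, 2 * x + (s : ZMod n) = 0 → x = z := by
    intro x hx
    have : (2 : ZMod n) * x = 2 * z := by
      have := hx.trans hz.symm
      linear_combination this
    exact hu.mul_left_cancel this
  -- basic facts
  have hzs : z + (s : ZMod n) = -z := by linear_combination hz
  suffices h : ((paf n a s -
      (2 * (∑ k ∈ Finset.range n, a k) - n + 2 - 2 * a z.val) : ℤ) : ZMod 8) = 0 by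
    exact_mod_cast (ZMod.intCast_zmod_eq_zero_iff_dvd _ 8).1 h
  rw [paf_zmod n s a, sum_zmod n a]
  push_cast
  set f : ZMod n → ZMod 8 := fun x => ((a x.val : ℤ) : ZMod 8) with hf
  have key : ∀ x : ZMod n, f x * f (x + s) =
      (f x - 1) * (f (x + s) - 1) + f x + f (x + s) - 1 := by
    intro x; ring
  rw [show (∑ x : ZMod n, ((a x.val : ZMod 8) * (a (x + s).val : ZMod 8)))
      = ∑ x : ZMod n, ((f x - 1) * (f (x + s) - 1) + f x + f (x + s) - 1) from
    Finset.sum_congr rfl fun x _ => key x]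
  have hshift : ∑ x : ZMod n, f (x + s) = ∑ x : ZMod n, f x := by
    exact Fintype.sum_equiv (Equiv.addRight (s : ZMod n)) _ _ (fun x => rfl)
  have hcard : (Finset.univ : Finset (ZMod n)).card = n := by
    simp [ZMod.card n]
  -- the involution part
  have hval4 : ∀ x : ZMod n, (f x - 1) = 0 ∨ (f x - 1) = -2 := by
    intro x
    rcases hpm x with h | h <;> simp [hf, h] <;> decide
  have hinv : ∑ x ∈ Finset.univ.erase z, (f x - 1) * (f (x + s) - 1) = 0 := by
    apply Finset.sum_involution (fun x _ => -x - (s : ZMod n))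
    · intro x _
      have h1 : f (-x - s) = f (x + s) := by
        have : -x - (s : ZMod n) = -(x + s) := by ring
        rw [this, hf]; simp only; rw [hsym]
      have h2 : f (-x - s + s) = f x := by
        have : -x - (s : ZMod n) + s = -x := by ring
        rw [this, hf]; simp only; rw [hsym]
      rw [h1, h2]
      have : (f x - 1) * (f (x + s) - 1) + (f (x + s) - 1) * (f x - 1)
          = 2 * ((f x - 1) * (f (x + s) - 1)) := by ring
      rw [this]
      rcases hval4 x with h | h <;> rcases hval4 (x + s) with h' | h' <;>
        rw [h, h'] <;> decide
    · intro x hx _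
      intro hcon
      have : 2 * x + (s : ZMod n) = 0 := by linear_combination - hcon
      exact (Finset.mem_erase.1 hx).1 (huniq x this)
    · intro x hx
      refine Finset.mem_erase.2 ⟨?_, Finset.mem_univ _⟩
      intro hcon
      apply (Finset.mem_erase.1 hx).1
      have : x = -z - s := by linear_combination - hcon
      rw [this]
      linear_combination -hz
    · intro x _; ring
  have hsplit : ∑ x : ZMod n, (f x - 1) * (f (x + s) - 1) = (f z - 1) * (f (z + s) - 1) := by
    rw [← Finset.add_sum_erase _ _ (Finset.mem_univ z), hinv, add_zero]
  have hdiag : (f z - 1) * (f (z + s) - 1) = 2 - 2 * f z := by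
    rw [hzs, hf]; simp only; rw [hsym]
    rcases hpm z with h | h <;> rw [h] <;> decide
  rw [show (∑ x : ZMod n, ((f x - 1) * (f (x + s) - 1) + f x + f (x + s) - 1))
      = (∑ x : ZMod n, (f x - 1) * (f (x + s) - 1)) + (∑ x : ZMod n, f x)
        + (∑ x : ZMod n, f (x + s)) - (Finset.univ : Finset (ZMod n)).card • (1 : ZMod 8) by
    rw [Finset.sum_sub_distrib, Finset.sum_add_distrib, Finset.sum_add_distrib,
      Finset.sum_const]]
  rw [hsplit, hdiag, hshift, hcard]
  simp only [nsmul_eq_mul, mul_one]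
  push_cast
  ring

lemma sumC (n m : ℕ) (hn : n = 2 * m + 1) (a : ℕ → ℤ) (hsym : SymmSeq n a) :
    ∑ k ∈ Finset.range n, a k = a 0 + 2 * ∑ k ∈ Finset.Ico 1 (m + 1), a k := by
  subst hn
  rw [Finset.range_eq_Ico,
    ← Finset.sum_Ico_consecutive _ (Nat.zero_le 1) (by omega : 1 ≤ 2 * m + 1),
    ← Finset.sum_Ico_consecutive _ (by omega : 1 ≤ m + 1) (by omega : m + 1 ≤ 2 * m + 1)]
  have h2 : ∑ k ∈ Finset.Ico (m + 1) (2 * m + 1), a k = ∑ k ∈ Finset.Ico 1 (m + 1), a k := by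
    refine Finset.sum_nbij' (fun k => 2 * m + 1 - k) (fun k => 2 * m + 1 - k) ?_ ?_ ?_ ?_ ?_
    · intro k hk; simp only [Finset.mem_Ico] at *; omega
    · intro k hk; simp only [Finset.mem_Ico] at *; omega
    · intro k hk; simp only [Finset.mem_Ico] at hk; omega
    · intro k hk; simp only [Finset.mem_Ico] at hk; omega
    · intro k hk
      rw [Finset.mem_Ico] at hk
      have := hsym (2 * m + 1 - k) (by omega) (by omega)
      rw [show 2 * m + 1 - (2 * m + 1 - k) = k by omega] at this
      exact this.symm
  rw [h2]
  simp
  ring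

lemma prodD (x1 x2 x3 x4 y1 y2 y3 y4 : ℤ)
    (h1 : x1 = 1 ∨ x1 = -1) (h2 : x2 = 1 ∨ x2 = -1) (h3 : x3 = 1 ∨ x3 = -1)
    (h4 : x4 = 1 ∨ x4 = -1) (h5 : y1 = 1 ∨ y1 = -1) (h6 : y2 = 1 ∨ y2 = -1)
    (h7 : y3 = 1 ∨ y3 = -1) (h8 : y4 = 1 ∨ y4 = -1)
    (hc : (4 : ℤ) ∣ (x1 + x2 + x3 + x4) - (y1 + y2 + y3 + y4) - 2) :
    x1 * x2 * x3 * x4 = -(y1 * y2 * y3 * y4) := by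
  rcases h1 with rfl | rfl <;> rcases h2 with rfl | rfl <;> rcases h3 with rfl | rfl <;>
    rcases h4 with rfl | rfl <;> rcases h5 with rfl | rfl <;> rcases h6 with rfl | rfl <;>
    rcases h7 with rfl | rfl <;> rcases h8 with rfl | rfl <;>
    first | omega | norm_num

theorem williamson_product_odd (n : ℕ) (hodd : Odd n) (a b c d : ℕ → ℤ)
    (hW : IsWilliamson n a b c d) :
    ∀ i, 1 ≤ i → 2 * i < n →
      a i * b i * c i * d i = -(a 0 * b 0 * c 0 * d 0) := by
  intro i hi1 hi2
  obtain ⟨m, hm⟩ := hodd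
  haveI : NeZero n := ⟨by omega⟩
  obtain ⟨sA, sB, sC, sD, pA, pB, pC, pD, hpaf⟩ := hW
  have hin : i < n := by omega
  have hsymZ : ∀ (x : ℕ → ℤ), SymmSeq n x → ∀ y : ZMod n, x (-y).val = x y.val := by
    intro x hx y
    by_cases h0 : y = 0
    · simp [h0]
    · rw [ZMod.neg_val, if_neg h0]
      have h1 : 1 ≤ y.val := by
        have : y.val ≠ 0 := fun h => h0 ((ZMod.val_eq_zero y).1 h)
        omega
      exact (hx y.val h1 (ZMod.val_lt y)).symm
  have hpmZ : ∀ (x : ℕ → ℤ), PMOne n x → ∀ y : ZMod n, x y.val = 1 ∨ x y.val = -1 :=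
    fun x hx y => hx _ (ZMod.val_lt y)
  obtain ⟨s, z, hs1, hs2, hz, hval⟩ :
      ∃ (s : ℕ) (z : ZMod n), 1 ≤ s ∧ s ≤ n / 2 ∧ 2 * z + (s : ZMod n) = 0 ∧
        ∀ (x : ℕ → ℤ), SymmSeq n x → x z.val = x i := by
    by_cases hcase : 2 * i ≤ m
    · refine ⟨2 * i, -(i : ZMod n), by omega, by omega, by push_cast; ring, ?_⟩
      intro x hx
      have := hsymZ x hx (i : ZMod n)
      rwa [ZMod.val_cast_of_lt hin] at this
    · refine ⟨n - 2 * i, (i : ZMod n), by omega, by omega, ?_, ?_⟩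
      · have hcast : ((n - 2 * i : ℕ) : ZMod n) = ((n : ℕ) : ZMod n) - ((2 * i : ℕ) : ZMod n) := by
          rw [Nat.cast_sub (by omega)]
        rw [hcast, ZMod.natCast_self]
        push_cast
        ring
      · intro x _
        rw [ZMod.val_cast_of_lt hin]
  have dA := keyB n s ⟨m, hm⟩ a (hsymZ a sA) (hpmZ a pA) z hz
  have dB := keyB n s ⟨m, hm⟩ b (hsymZ b sB) (hpmZ b pB) z hz
  have dC := keyB n s ⟨m, hm⟩ c (hsymZ c sC) (hpmZ c pC) z hz
  have dD := keyB n s ⟨m, hm⟩ d (hsymZ d sD) (hpmZ d pD) z hz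
  rw [hval a sA] at dA
  rw [hval b sB] at dB
  rw [hval c sC] at dC
  rw [hval d sD] at dD
  have h0 := hpaf s hs1 hs2
  have eA := sumC n m hm a sA
  have eB := sumC n m hm b sB
  have eC := sumC n m hm c sC
  have eD := sumC n m hm d sD
  have hRdvd : (2 : ℤ) ∣ (∑ k ∈ Finset.Ico 1 (m + 1), a k) + (∑ k ∈ Finset.Ico 1 (m + 1), b k)
      + (∑ k ∈ Finset.Ico 1 (m + 1), c k) + (∑ k ∈ Finset.Ico 1 (m + 1), d k) := by
    rw [← Finset.sum_add_distrib, ← Finset.sum_add_distrib, ← Finset.sum_add_distrib]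
    apply Finset.dvd_sum
    intro k hk
    rw [Finset.mem_Ico] at hk
    have hkn : k < n := by omega
    rcases pA k hkn with h | h <;> rcases pB k hkn with h' | h' <;>
      rcases pC k hkn with h'' | h'' <;> rcases pD k hkn with h''' | h''' <;> omega
  have hc4 : (4 : ℤ) ∣ (a i + b i + c i + d i) - (a 0 + b 0 + c 0 + d 0) - 2 := by omega
  exact prodD _ _ _ _ _ _ _ _ (pA i hin) (pB i hin) (pC i hin) (pD i hin)
    (pA 0 (by omega)) (pB 0 (by omega)) (pC 0 (by omega)) (pD 0 (by omega)) hc4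
end

section
/- If A, B, C, D is a Williamson sequence of even order n = 2m, then a_i·b_i·c_i·d_i = a_{i+m}·b_{i+m}·c_{i+m}·d_{i+m} for all indices i with 0 ≤ i < m. -/
open Finset

lemma modeq (n l r : ℕ) (hr : r < n) (h : l = r ∨ l = r + n) : l % n = r := by
  rcases h with h | h <;> subst h
  · exact Nat.mod_eq_of_lt hr
  · rw [Nat.add_mod_right]; exact Nat.mod_eq_of_lt hr

lemma shift1 {M : Type*} [AddCommMonoid M] (n : ℕ) (h : ℕ → M) :
    ∑ k ∈ range n, h ((k + 1) % n) = ∑ k ∈ range n, h (k % n) := by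
  cases n with
  | zero => simp
  | succ t =>
    rw [Finset.sum_range_succ, Finset.sum_range_succ' (fun k => h (k % (t+1)))]
    simp [Nat.mod_self]

lemma sum_shift_s9 {M : Type*} [AddCommMonoid M] (n j : ℕ) (g : ℕ → M) :
    ∑ k ∈ range n, g ((k + j) % n) = ∑ k ∈ range n, g (k % n) := by
  induction j with
  | zero => simp
  | succ j ih =>
    have e : ∀ k : ℕ, (k + (j + 1)) % n = ((k + 1) % n + j) % n := by
      intro k; rw [Nat.mod_add_mod]; ring_nf
    simp only [e]
    rw [shift1 n (fun l => g ((l + j) % n))]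
    simp only [Nat.mod_add_mod]
    exact ih

lemma sum_shift' {M : Type*} [AddCommMonoid M] (n j : ℕ) (g : ℕ → M) :
    ∑ k ∈ range n, g ((k + j) % n) = ∑ k ∈ range n, g k := by
  rw [sum_shift_s9]
  exact Finset.sum_congr rfl fun k hk => by rw [Nat.mod_eq_of_lt (mem_range.mp hk)]

lemma parity_sum (n : ℕ) (f : ℕ → ZMod 2) (σ : ℕ → ℕ)
    (h1 : ∀ k < n, σ k < n) (h2 : ∀ k < n, σ (σ k) = k) (h3 : ∀ k < n, f (σ k) = f k) :
    ∑ k ∈ range n, f k = ∑ k ∈ (range n).filter (fun k => σ k = k), f k := by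
  rw [← Finset.sum_filter_add_sum_filter_not (range n) (fun k => σ k = k) f]
  have hz : ∑ k ∈ (range n).filter (fun k => ¬ σ k = k), f k = 0 := by
    apply Finset.sum_involution (fun a _ => σ a)
    · intro a ha
      have han : a < n := mem_range.mp (mem_filter.mp ha).1
      rw [h3 a han]
      exact (CharTwo.add_self_eq_zero (f a))
    · intro a ha _
      exact (mem_filter.mp ha).2
    · intro a ha
      have han : a < n := mem_range.mp (mem_filter.mp ha).1
      refine mem_filter.mpr ⟨mem_range.mpr (h1 a han), ?_⟩
      intro hc
      exact (mem_filter.mp ha).2 (by rw [← h2 a han, hc, hc])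
    · intro a ha
      exact h2 a (mem_range.mp (mem_filter.mp ha).1)
  rw [hz, add_zero]

/-- indicator of the `-1` entries -/
def alf (x : ℕ → ℤ) (k : ℕ) : ℤ := if x k = 1 then 0 else 1

lemma alf01 (x : ℕ → ℤ) (k : ℕ) : alf x k = 0 ∨ alf x k = 1 := by
  unfold alf; split_ifs <;> simp

lemma x_eq (n : ℕ) (x : ℕ → ℤ) (hp : PMOne n x) (k : ℕ) (hk : k < n) :
    x k = 1 - 2 * alf x k := by
  unfold alf; rcases hp k hk with h | h <;> rw [h] <;> norm_num

lemma alf_symm (n : ℕ) (x : ℕ → ℤ) (hs : SymmSeq n x) (k : ℕ) (h1 : 1 ≤ k) (h2 : k < n) :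
    alf x k = alf x (n - k) := by
  unfold alf; rw [hs k h1 h2]

lemma paf_expand (n : ℕ) (hn : 0 < n) (x : ℕ → ℤ) (hp : PMOne n x) (j : ℕ) :
    paf n x j = (n : ℤ) - 4 * (∑ k ∈ Finset.range n, alf x k)
      + 4 * ∑ k ∈ Finset.range n, alf x k * alf x ((k + j) % n) := by
  unfold paf
  have hcong : ∀ k ∈ Finset.range n, x k * x ((k + j) % n) =
      1 - 2 * alf x k - 2 * alf x ((k + j) % n) + 4 * (alf x k * alf x ((k + j) % n)) := by
    intro k hk
    rw [x_eq n x hp k (Finset.mem_range.mp hk), x_eq n x hp _ (Nat.mod_lt _ hn)]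
    ring
  rw [Finset.sum_congr rfl hcong]
  have hshift : ∑ k ∈ Finset.range n, alf x ((k + j) % n) = ∑ k ∈ Finset.range n, alf x k :=
    sum_shift' n j (alf x)
  simp only [Finset.sum_add_distrib, Finset.sum_sub_distrib, Finset.sum_const,
    Finset.card_range, nsmul_eq_mul, mul_one, ← Finset.mul_sum, hshift]
  ring

section pairing
open Finset

variable (n m : ℕ) (A : ℕ → ZMod 2)

lemma sqZ2 (x : ZMod 2) : x * x = x := by revert x; decide

lemma beta_pair (j : ℕ) (hj1 : 1 ≤ j) (hjn : j < n)
    (hA : ∀ k, 1 ≤ k → k < n → A k = A (n - k)) (k : ℕ) (hk : k < n) :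
    A (if j + k ≤ n then n - (j + k) else 2 * n - (j + k)) *
      A (((if j + k ≤ n then n - (j + k) else 2 * n - (j + k)) + j) % n)
      = A k * A ((k + j) % n) := by
  split_ifs with hc
  · rcases Nat.eq_zero_or_pos k with hk0 | hk1
    · subst hk0
      have e1 : n - (j + 0) + j = n := by omega
      have e2 : n - (j + 0) = n - j := by omega
      rw [e1, e2, modeq n n 0 (by omega) (by omega), modeq n (0 + j) j hjn (by omega),
        ← hA j hj1 hjn, mul_comm]
    · rcases Nat.lt_or_ge (j + k) n with hlt | hge
      · have e1 : n - (j + k) + j = n - k := by omega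
        rw [e1, modeq n (n - k) (n - k) (by omega) (by omega),
          modeq n (k + j) (k + j) (by omega) (by omega)]
        have e2 : A (n - (j + k)) = A (j + k) := (hA (j + k) (by omega) (by omega)).symm
        have e3 : A (n - k) = A k := (hA k hk1 hk).symm
        rw [e2, e3, mul_comm]
        have e4 : j + k = k + j := by omega
        rw [e4]
      · have hjk : j + k = n := by omega
        have e1 : n - (j + k) = 0 := by omega
        rw [e1, modeq n (0 + j) j hjn (by omega), modeq n (k + j) 0 (by omega) (by omega)]
        have e2 : k = n - j := by omega
        rw [e2, ← hA j hj1 hjn, mul_comm]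
  · have hgt : n < j + k := by omega
    have e1 : 2 * n - (j + k) + j = 2 * n - k := by omega
    rw [e1, modeq n (2 * n - k) (n - k) (by omega) (by omega),
      modeq n (k + j) (k + j - n) (by omega) (by omega)]
    have e2 : 2 * n - (j + k) = n - (j + k - n) := by omega
    rw [e2, ← hA (j + k - n) (by omega) (by omega), ← hA k (by omega) hk, mul_comm]
    have e3 : j + k - n = k + j - n := by omega
    rw [e3]

lemma beta_odd (hn : n = 2 * m) (hm : 1 ≤ m)
    (hA : ∀ k, 1 ≤ k → k < n → A k = A (n - k)) :
    ∑ k ∈ range n, A k * A ((k + 1) % n) = 0 := by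
  have hjn : 1 < n := by omega
  rw [parity_sum n _ (fun k => if 1 + k ≤ n then n - (1 + k) else 2 * n - (1 + k))
    (fun k hk => by split_ifs <;> omega)
    (fun k hk => by split_ifs <;> omega)
    (fun k hk => beta_pair n A 1 le_rfl hjn hA k hk)]
  have he : (range n).filter
      (fun k => (if 1 + k ≤ n then n - (1 + k) else 2 * n - (1 + k)) = k) = ∅ := by
    apply Finset.eq_empty_iff_forall_notMem.mpr
    intro k hk
    rw [mem_filter, mem_range] at hk
    obtain ⟨h1, h2⟩ := hk
    split_ifs at h2 <;> omega
  rw [he, Finset.sum_empty]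

lemma beta_even (hn : n = 2 * m) (r : ℕ) (hr1 : 1 ≤ r) (hr2 : 2 * r < m)
    (hA : ∀ k, 1 ≤ k → k < n → A k = A (n - k)) :
    ∑ k ∈ range n, A k * A ((k + 2 * r) % n) = A r + A (m + r) := by
  have hjn : 2 * r < n := by omega
  rw [parity_sum n _ (fun k => if 2 * r + k ≤ n then n - (2 * r + k) else 2 * n - (2 * r + k))
    (fun k hk => by split_ifs <;> omega)
    (fun k hk => by split_ifs <;> omega)
    (fun k hk => beta_pair n A (2 * r) (by omega) hjn hA k hk)]
  have he : (range n).filter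
      (fun k => (if 2 * r + k ≤ n then n - (2 * r + k) else 2 * n - (2 * r + k)) = k)
      = {m - r, 2 * m - r} := by
    ext k
    rw [mem_filter, mem_range, mem_insert, mem_singleton]
    constructor
    · rintro ⟨h1, h2⟩
      split_ifs at h2 <;> omega
    · intro h
      rcases h with h | h <;> subst h <;> refine ⟨by omega, ?_⟩ <;>
        · split_ifs <;> omega
  rw [he, Finset.sum_pair (by omega : m - r ≠ 2 * m - r)]
  have e1 : m - r + 2 * r = m + r := by omega
  have e2 : 2 * m - r + 2 * r = r + n := by omega
  rw [e1, e2, modeq n (m + r) (m + r) (by omega) (by omega),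
    modeq n (r + n) r (by omega) (by omega)]
  have e3 : A (m - r) = A (m + r) := by
    rw [hA (m - r) (by omega) (by omega)]
    congr 1
    omega
  have e4 : A (2 * m - r) = A r := by
    rw [hA r (by omega) (by omega)]
    congr 1
    omega
  rw [e3, e4, sqZ2, sqZ2, add_comm]

lemma sigma_par (hn : n = 2 * m) (hm : 1 ≤ m)
    (hA : ∀ k, 1 ≤ k → k < n → A k = A (n - k)) :
    ∑ k ∈ range n, A k = A 0 + A m := by
  rw [parity_sum n _ (fun k => if k = 0 then 0 else n - k)
    (fun k hk => by split_ifs <;> omega)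
    (fun k hk => by split_ifs <;> omega)
    (fun k hk => by
      split_ifs with h
      · rw [h]
      · exact (hA k (by omega) hk).symm)]
  have he : (range n).filter (fun k => (if k = 0 then 0 else n - k) = k) = {0, m} := by
    ext k
    rw [mem_filter, mem_range, mem_insert, mem_singleton]
    constructor
    · rintro ⟨h1, h2⟩
      split_ifs at h2 <;> omega
    · intro h
      rcases h with h | h <;> subst h <;> refine ⟨by omega, ?_⟩ <;>
        · split_ifs <;> omega
  rw [he, Finset.sum_pair (by omega : 0 ≠ m)]

end pairing

section core
open Finset

lemma two_zmod : ((2 : ℤ) : ZMod 2) = 0 := by decide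

lemma core (n m : ℕ) (hn : n = 2 * m) (hm : 1 ≤ m) (a b c d : ℕ → ℤ)
    (hW : IsWilliamson n a b c d) (r : ℕ) (hr : r = 0 ∨ (1 ≤ r ∧ 2 * r < m)) :
    (2 : ℤ) ∣ (alf a r + alf a (m + r) + alf b r + alf b (m + r)
      + alf c r + alf c (m + r) + alf d r + alf d (m + r)) := by
  obtain ⟨sa, sb, sc, sd, pa, pb, pc, pd, hpaf⟩ := hW
  have hn0 : 0 < n := by omega
  -- the integer-level identity for β-sums
  have key : ∀ j : ℕ, 1 ≤ j → j ≤ m →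
      ((∑ k ∈ range n, alf a k * alf a ((k + j) % n))
      + (∑ k ∈ range n, alf b k * alf b ((k + j) % n))
      + (∑ k ∈ range n, alf c k * alf c ((k + j) % n))
      + (∑ k ∈ range n, alf d k * alf d ((k + j) % n)) : ℤ)
      = ((∑ k ∈ range n, alf a k) + (∑ k ∈ range n, alf b k)
        + (∑ k ∈ range n, alf c k) + (∑ k ∈ range n, alf d k)) - n := by
    intro j hj1 hj2
    have h0 := hpaf j hj1 (by omega)
    rw [paf_expand n hn0 a pa j, paf_expand n hn0 b pb j,
      paf_expand n hn0 c pc j, paf_expand n hn0 d pd j] at h0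
    linarith
  -- ZMod 2 coefficient functions
  have hcast : ∀ (x : ℕ → ℤ) (j : ℕ),
      ((∑ k ∈ range n, alf x k * alf x ((k + j) % n) : ℤ) : ZMod 2)
      = ∑ k ∈ range n, (fun l => ((alf x l : ℤ) : ZMod 2)) k
          * (fun l => ((alf x l : ℤ) : ZMod 2)) ((k + j) % n) := by
    intro x j
    push_cast
    rfl
  have hcastσ : ∀ (x : ℕ → ℤ),
      ((∑ k ∈ range n, alf x k : ℤ) : ZMod 2)
      = ∑ k ∈ range n, (fun l => ((alf x l : ℤ) : ZMod 2)) k := by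
    intro x
    push_cast
    rfl
  have hsymA : ∀ (x : ℕ → ℤ), SymmSeq n x → ∀ k, 1 ≤ k → k < n →
      (fun l => ((alf x l : ℤ) : ZMod 2)) k = (fun l => ((alf x l : ℤ) : ZMod 2)) (n - k) := by
    intro x hs k h1 h2
    simp only
    rw [alf_symm n x hs k h1 h2]
  -- β(1) ≡ 0 (mod 2) for each sequence
  have hodd : ∀ (x : ℕ → ℤ), SymmSeq n x →
      ((∑ k ∈ range n, alf x k * alf x ((k + 1) % n) : ℤ) : ZMod 2) = 0 := by
    intro x hs
    rw [hcast x 1]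
    exact beta_odd n m _ hn hm (hsymA x hs)
  have hncast : ((n : ℤ) : ZMod 2) = 0 := by
    have : ((n : ℤ) : ZMod 2) = ((2 : ℤ) : ZMod 2) * ((m : ℤ) : ZMod 2) := by
      rw [hn]; push_cast; ring
    rw [this, two_zmod, zero_mul]
  have h1 := key 1 le_rfl hm
  rcases hr with hr0 | ⟨hr1, hr2⟩
  · -- r = 0 : use the σ-parity
    subst hr0
    have hσ : ∀ (x : ℕ → ℤ), SymmSeq n x →
        ((∑ k ∈ range n, alf x k : ℤ) : ZMod 2)
        = ((alf x 0 : ℤ) : ZMod 2) + ((alf x m : ℤ) : ZMod 2) := by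
      intro x hs
      rw [hcastσ x]
      exact sigma_par n m _ hn hm (hsymA x hs)
    rw [(by omega : m + 0 = m)]
    rw [show (2:ℤ) = ((2:ℕ):ℤ) by norm_num, ← ZMod.intCast_zmod_eq_zero_iff_dvd]
    have hz := congrArg (fun t : ℤ => ((t : ZMod 2))) h1
    simp only [Int.cast_add, Int.cast_sub] at hz
    rw [hodd a sa, hodd b sb, hodd c sc, hodd d sd] at hz
    rw [hσ a sa, hσ b sb, hσ c sc, hσ d sd] at hz
    rw [hncast] at hz
    push_cast
    linear_combination -hz
  · -- r ≥ 1 : use β(2r)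
    have h2 := key (2 * r) (by omega) (by omega)
    have heq : ((∑ k ∈ range n, alf a k * alf a ((k + 2 * r) % n))
      + (∑ k ∈ range n, alf b k * alf b ((k + 2 * r) % n))
      + (∑ k ∈ range n, alf c k * alf c ((k + 2 * r) % n))
      + (∑ k ∈ range n, alf d k * alf d ((k + 2 * r) % n)) : ℤ)
      = ((∑ k ∈ range n, alf a k * alf a ((k + 1) % n))
      + (∑ k ∈ range n, alf b k * alf b ((k + 1) % n))
      + (∑ k ∈ range n, alf c k * alf c ((k + 1) % n))
      + (∑ k ∈ range n, alf d k * alf d ((k + 1) % n)) : ℤ) := by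
      rw [h1, h2]
    have heven : ∀ (x : ℕ → ℤ), SymmSeq n x →
        ((∑ k ∈ range n, alf x k * alf x ((k + 2 * r) % n) : ℤ) : ZMod 2)
        = ((alf x r : ℤ) : ZMod 2) + ((alf x (m + r) : ℤ) : ZMod 2) := by
      intro x hs
      rw [hcast x (2 * r)]
      exact beta_even n m _ hn r hr1 hr2 (hsymA x hs)
    rw [show (2:ℤ) = ((2:ℕ):ℤ) by norm_num, ← ZMod.intCast_zmod_eq_zero_iff_dvd]
    have hz := congrArg (fun t : ℤ => ((t : ZMod 2))) heq
    simp only [Int.cast_add] at hz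
    rw [hodd a sa, hodd b sb, hodd c sc, hodd d sd] at hz
    rw [heven a sa, heven b sb, heven c sc, heven d sd] at hz
    push_cast
    linear_combination hz

end core

lemma prod_of_par (n m : ℕ) (hn : n = 2 * m) (a b c d : ℕ → ℤ)
    (pa : PMOne n a) (pb : PMOne n b) (pc : PMOne n c) (pd : PMOne n d)
    (r : ℕ) (hr : r < m)
    (h : (2 : ℤ) ∣ (alf a r + alf a (m + r) + alf b r + alf b (m + r)
      + alf c r + alf c (m + r) + alf d r + alf d (m + r))) :
    a r * b r * c r * d r = a (r + m) * b (r + m) * c (r + m) * d (r + m) := by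
  have e : m + r = r + m := by omega
  rw [e] at h
  unfold alf at h
  have h1 := pa r (by omega)
  have h2 := pa (r + m) (by omega)
  have h3 := pb r (by omega)
  have h4 := pb (r + m) (by omega)
  have h5 := pc r (by omega)
  have h6 := pc (r + m) (by omega)
  have h7 := pd r (by omega)
  have h8 := pd (r + m) (by omega)
  rcases h1 with h1 | h1 <;> rcases h2 with h2 | h2 <;> rcases h3 with h3 | h3 <;>
    rcases h4 with h4 | h4 <;> rcases h5 with h5 | h5 <;> rcases h6 with h6 | h6 <;>
    rcases h7 with h7 | h7 <;> rcases h8 with h8 | h8 <;>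
    rw [h1, h2, h3, h4, h5, h6, h7, h8] at h ⊢ <;> revert h <;> norm_num

theorem williamson_product_even (n m : ℕ) (hn : n = 2 * m) (a b c d : ℕ → ℤ)
    (hW : IsWilliamson n a b c d) :
    ∀ i < m, a i * b i * c i * d i = a (i + m) * b (i + m) * c (i + m) * d (i + m) := by
  intro i him
  have hm : 1 ≤ m := by omega
  obtain ⟨sa, sb, sc, sd, pa, pb, pc, pd, _⟩ := hW
  rcases lt_trichotomy (2 * i) m with h2 | h2 | h2
  · exact prod_of_par n m hn a b c d pa pb pc pd i him
      (core n m hn hm a b c d ⟨sa, sb, sc, sd, pa, pb, pc, pd, ‹_›⟩ i (by omega))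
  · have key : ∀ x : ℕ → ℤ, SymmSeq n x → x (i + m) = x i := by
      intro x hs
      rw [hs (i + m) (by omega) (by omega)]
      congr 1
      omega
    rw [key a sa, key b sb, key c sc, key d sd]
  · have hi1 : 1 ≤ i := by omega
    set r := m - i with hrdef
    have hmain := prod_of_par n m hn a b c d pa pb pc pd r (by omega)
      (core n m hn hm a b c d ⟨sa, sb, sc, sd, pa, pb, pc, pd, ‹_›⟩ r (by omega))
    have key1 : ∀ x : ℕ → ℤ, SymmSeq n x → x r = x (i + m) := by
      intro x hs
      rw [hs r (by omega) (by omega)]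
      congr 1
      omega
    have key2 : ∀ x : ℕ → ℤ, SymmSeq n x → x (r + m) = x i := by
      intro x hs
      rw [hs (r + m) (by omega) (by omega)]
      congr 1
      omega
    rw [key1 a sa, key1 b sb, key1 c sc, key1 d sd,
      key2 a sa, key2 b sb, key2 c sc, key2 d sd] at hmain
    exact hmain.symm
end

section
/- Let A, B, C, D be a Williamson sequence of even order n = 2m, and let A′, B′, C′, D′ be their 2-compressions (sequences of length m). Then a′_j + b′_j + c′_j + d′_j ≡ 0 (mod 4) for all j = 0, …, m−1. -/
lemma two_smul_eq_zero_iff {m : ℕ} (hm : 0 < m) (t : ZMod (2*m)) :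
    t + t = 0 ↔ t = 0 ∨ t = (m : ZMod (2*m)) := by
  haveI : NeZero (2*m) := ⟨by omega⟩
  constructor
  · intro h
    have hv : ((t.val + t.val : ℕ) : ZMod (2*m)) = 0 := by
      push_cast [ZMod.natCast_zmod_val]; exact h
    rw [ZMod.natCast_eq_zero_iff] at hv
    have hlt := ZMod.val_lt t
    rw [← two_mul] at hv
    have hmd : m ∣ t.val := (Nat.mul_dvd_mul_iff_left (by norm_num : 0 < 2)).mp hv
    obtain ⟨c, hc⟩ := hmd
    have hc2 : c < 2 := by nlinarith
    have : t.val = 0 ∨ t.val = m := by interval_cases c <;> omega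
    rcases this with h0 | h0
    · left; rw [← ZMod.natCast_zmod_val t, h0]; simp
    · right; rw [← ZMod.natCast_zmod_val t, h0]
  · rintro (rfl | rfl)
    · simp
    · have : ((m : ZMod (2*m)) + m) = ((2*m : ℕ) : ZMod (2*m)) := by push_cast; ring
      rw [this, ZMod.natCast_self]

lemma m_ne_zero {m : ℕ} (hm : 0 < m) : (m : ZMod (2*m)) ≠ 0 := by
  haveI : NeZero (2*m) := ⟨by omega⟩
  rw [Ne, ZMod.natCast_eq_zero_iff]
  intro h
  have := Nat.le_of_dvd hm h
  omega

lemma zmod2_add_self (z : ZMod 2) : z + z = 0 := by revert z; decide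
lemma zmod2_mul_self (z : ZMod 2) : z * z = z := by revert z; decide

lemma key (m : ℕ) [NeZero (2*m)] (hm : 0 < m) (v : Fin 4 → ZMod (2*m) → ℤ)
    (hpm : ∀ i k, v i k = 1 ∨ v i k = -1)
    (hsym : ∀ i k, v i (-k) = v i k)
    (hpaf : ∀ s : ℕ, 1 ≤ s → s ≤ m →
      ∑ i : Fin 4, ∑ k : ZMod (2*m), v i k * v i (k + (s : ZMod (2*m))) = 0) :
    ∀ j : ℕ, j < m → (4:ℤ) ∣ ∑ i : Fin 4,
      (v i ((j:ℕ) : ZMod (2*m)) + v i (((j:ℕ) : ZMod (2*m)) + (m : ZMod (2*m)))) := by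
  set B : Fin 4 → ZMod (2*m) → ℤ := fun i k => if v i k = 1 then 0 else 1 with hB
  have hvB : ∀ i k, v i k = 1 - 2 * B i k := by
    intro i k
    rcases hpm i k with h | h <;> simp [hB, h]
  have hBsym : ∀ i k, B i (-k) = B i k := by
    intro i k; simp [hB, hsym i k]
  have hshift : ∀ (f : ZMod (2*m) → ℤ) (s : ZMod (2*m)),
      ∑ k : ZMod (2*m), f (k + s) = ∑ k : ZMod (2*m), f k :=
    fun f s => Fintype.sum_equiv (Equiv.addRight s) _ _ (fun k => rfl)
  set S : ℤ := ∑ i : Fin 4, ∑ k : ZMod (2*m), B i k with hS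
  set E : ZMod (2*m) → ℤ := fun s => ∑ i : Fin 4, ∑ k : ZMod (2*m), B i k * B i (k + s) with hE
  -- step A
  have hEeq : ∀ s : ℕ, 1 ≤ s → s ≤ m → E ((s:ℕ) : ZMod (2*m)) = S - (2*m : ℕ) := by
    intro s h1 h2
    have h0 := hpaf s h1 h2
    have expand : ∀ i : Fin 4, ∑ k : ZMod (2*m), v i k * v i (k + (s : ZMod (2*m))) =
        ((2*m : ℕ) : ℤ) - 4 * (∑ k : ZMod (2*m), B i k)
          + 4 * (∑ k : ZMod (2*m), B i k * B i (k + (s : ZMod (2*m)))) := by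
      intro i
      have hterm : ∀ k : ZMod (2*m), v i k * v i (k + (s : ZMod (2*m))) =
          1 - 2 * B i k - 2 * B i (k + (s : ZMod (2*m)))
            + 4 * (B i k * B i (k + (s : ZMod (2*m)))) := by
        intro k; rw [hvB i k, hvB i (k + (s : ZMod (2*m)))]; ring
      rw [Finset.sum_congr rfl (fun k _ => hterm k)]
      rw [Finset.sum_add_distrib, Finset.sum_sub_distrib, Finset.sum_sub_distrib]
      rw [← Finset.mul_sum, ← Finset.mul_sum, ← Finset.mul_sum]
      rw [hshift (fun k => B i k) ((s : ZMod (2*m)))]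
      simp only [Finset.sum_const, Finset.card_univ, ZMod.card, nsmul_eq_mul, mul_one]
      push_cast
      ring
    rw [Finset.sum_congr rfl (fun i _ => expand i)] at h0
    simp only [Finset.sum_add_distrib, Finset.sum_sub_distrib, ← Finset.mul_sum] at h0
    simp only [Finset.sum_const, Finset.card_univ, Fintype.card_fin, nsmul_eq_mul] at h0
    have h4 : (4:ℤ) * E ((s:ℕ) : ZMod (2*m)) = 4 * S - 4 * ((2*m:ℕ) : ℤ) := by
      rw [hE, hS]; push_cast at h0 ⊢; linarith
    linarith
  have hEneg : ∀ s : ZMod (2*m), E (-s) = E s := by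
    intro s
    rw [hE]
    refine Finset.sum_congr rfl (fun i _ => ?_)
    calc ∑ k : ZMod (2*m), B i k * B i (k + -s)
        = ∑ k : ZMod (2*m), B i (k + s) * B i (k + s + -s) :=
          (hshift (fun k => B i k * B i (k + -s)) s).symm
      _ = ∑ k : ZMod (2*m), B i k * B i (k + s) := by
          refine Finset.sum_congr rfl (fun k _ => ?_)
          rw [add_neg_cancel_right, mul_comm]
  -- step B : parity
  set bb : Fin 4 → ZMod (2*m) → ZMod 2 := fun i k => ((B i k : ℤ) : ZMod 2) with hbb
  have hbbsym : ∀ i k, bb i (-k) = bb i k := by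
    intro i k; simp only [hbb, hBsym i k]
  set w : ZMod (2*m) → ZMod 2 := fun t => ∑ i : Fin 4, bb i t with hw
  have hpar : ∀ c : ZMod (2*m), ((E c : ℤ) : ZMod 2) =
      ∑ i : Fin 4, ∑ k ∈ Finset.univ.filter (fun k => k + k = -c), bb i k * bb i (k + c) := by
    intro c
    rw [hE]
    push_cast [hbb]
    refine Finset.sum_congr rfl (fun i _ => ?_)
    rw [← Finset.sum_filter_add_sum_filter_not Finset.univ (fun k => k + k = -c)
      (fun k => bb i k * bb i (k + c))]
    have hz : ∑ k ∈ Finset.univ.filter (fun k => ¬(k + k = -c)), bb i k * bb i (k + c) = 0 := by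
      refine Finset.sum_involution (fun a _ => -a - c) ?_ ?_ ?_ ?_
      · intro a _
        have e1 : -a - c + c = -a := by ring
        have e2 : bb i (-a - c) = bb i (a + c) := by
          rw [show -a - c = -(a + c) by ring, hbbsym]
        rw [e1, e2, hbbsym i a, mul_comm]
        exact zmod2_add_self _
      · intro a ha _ hga
        rw [Finset.mem_filter] at ha
        exact ha.2 (by linear_combination -hga)
      · intro a ha
        rw [Finset.mem_filter] at ha ⊢
        refine ⟨Finset.mem_univ _, fun h => ha.2 ?_⟩
        linear_combination -h
      · intro a _
        ring
    rw [hz, add_zero]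
  -- odd shift 1 : empty fixed set
  have hone : (Int.cast (S - ((2*m:ℕ) : ℤ)) : ZMod 2) = 0 := by
    have h1 : E ((1:ℕ) : ZMod (2*m)) = S - (2*m : ℕ) := hEeq 1 le_rfl hm
    have hfil : Finset.univ.filter
        (fun k : ZMod (2*m) => k + k = -(((1:ℕ) : ZMod (2*m)))) = ∅ := by
      rw [Finset.eq_empty_iff_forall_notMem]
      intro k hk
      rw [Finset.mem_filter] at hk
      have hk2 := hk.2
      rw [Nat.cast_one] at hk2
      have hdvd : (2:ℕ) ∣ 2*m := ⟨m, rfl⟩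
      have hcg := congrArg (ZMod.castHom hdvd (ZMod 2)) hk2
      rw [map_add, zmod2_add_self, map_neg, map_one] at hcg
      exact (by decide : ¬(0 : ZMod 2) = -1) hcg
    have hp := hpar ((1:ℕ) : ZMod (2*m))
    rw [h1, hfil] at hp
    simp only [Finset.sum_empty, Finset.sum_const_zero] at hp
    exact_mod_cast hp
  have hmm0 : (m : ZMod (2*m)) + (m : ZMod (2*m)) = 0 := by
    have h2 : ((m + m : ℕ) : ZMod (2*m)) = ((2*m : ℕ) : ZMod (2*m)) := by
      congr 1; omega
    push_cast at h2
    rw [h2]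
    exact_mod_cast ZMod.natCast_self (2*m)
  -- fixed set for even shifts
  have hfix : ∀ j : ZMod (2*m), ((E (j + j) : ℤ) : ZMod 2) = w j + w (j + (m : ZMod (2*m))) := by
    intro j
    rw [hpar]
    have hfil : Finset.univ.filter (fun k : ZMod (2*m) => k + k = -(j + j)) =
        {-j, (m : ZMod (2*m)) - j} := by
      ext k
      simp only [Finset.mem_filter, Finset.mem_univ, true_and, Finset.mem_insert,
        Finset.mem_singleton]
      constructor
      · intro h
        have h2 : (k + j) + (k + j) = 0 := by linear_combination h
        rcases (two_smul_eq_zero_iff hm (k + j)).mp h2 with h3 | h3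
        · left; linear_combination h3
        · right; linear_combination h3
      · rintro (rfl | rfl)
        · ring
        · linear_combination hmm0
    have hne : -j ≠ (m : ZMod (2*m)) - j := by
      intro h
      exact m_ne_zero hm (by linear_combination -h)
    rw [hfil]
    have hterm : ∀ i : Fin 4, ∑ k ∈ ({-j, (m : ZMod (2*m)) - j} : Finset (ZMod (2*m))),
        bb i k * bb i (k + (j + j)) = bb i j + bb i (j + (m : ZMod (2*m))) := by
      intro i
      rw [Finset.sum_pair hne]
      have e1 : -j + (j + j) = j := by ring
      have e2 : (m : ZMod (2*m)) - j + (j + j) = j + (m : ZMod (2*m)) := by ring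
      have e3 : bb i ((m : ZMod (2*m)) - j) = bb i (j + (m : ZMod (2*m))) := by
        rw [show (m : ZMod (2*m)) - j = -(j - (m : ZMod (2*m))) by ring, hbbsym,
          show j - (m : ZMod (2*m)) = j + (m : ZMod (2*m)) by linear_combination -hmm0]
      rw [e1, e2, e3, hbbsym i j, zmod2_mul_self, zmod2_mul_self]
    rw [Finset.sum_congr rfl (fun i _ => hterm i), Finset.sum_add_distrib, hw]
  -- even shifts : w j + w (j+m) = 0 for 1 ≤ j < m
  have hwj : ∀ j : ℕ, 1 ≤ j → j < m →
      w ((j:ℕ) : ZMod (2*m)) + w (((j:ℕ) : ZMod (2*m)) + (m : ZMod (2*m))) = 0 := by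
    intro j h1 h2
    have hcast : ((2*j : ℕ) : ZMod (2*m)) = ((j:ℕ) : ZMod (2*m)) + ((j:ℕ) : ZMod (2*m)) := by
      push_cast; ring
    have hEjj : E (((j:ℕ) : ZMod (2*m)) + ((j:ℕ) : ZMod (2*m))) = S - (2*m : ℕ) := by
      by_cases hle : 2*j ≤ m
      · rw [← hcast]; exact hEeq (2*j) (by omega) hle
      · have hs : ((2*m - 2*j : ℕ) : ZMod (2*m)) =
            -(((j:ℕ) : ZMod (2*m)) + ((j:ℕ) : ZMod (2*m))) := by
          rw [← hcast]
          have hadd : ((2*m - 2*j : ℕ) : ZMod (2*m)) + ((2*j : ℕ) : ZMod (2*m))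
              = ((2*m : ℕ) : ZMod (2*m)) := by
            rw [← Nat.cast_add]
            congr 1
            omega
          rw [ZMod.natCast_self] at hadd
          linear_combination hadd
        have hres := hEeq (2*m - 2*j) (by omega) (by omega)
        rw [hs, hEneg] at hres
        exact hres
    have hfx := hfix ((j:ℕ) : ZMod (2*m))
    rw [hEjj, hone] at hfx
    exact hfx.symm
  -- sums over ZMod as sums over range
  have hsum_zmod : ∀ (g : ZMod (2*m) → ZMod 2),
      ∑ k : ZMod (2*m), g k = ∑ r ∈ Finset.range (2*m), g ((r : ℕ) : ZMod (2*m)) := by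
    intro g
    refine Finset.sum_nbij' (fun k => k.val) (fun r => ((r : ℕ) : ZMod (2*m))) ?_ ?_ ?_ ?_ ?_
    · intro a _; exact Finset.mem_range.mpr (ZMod.val_lt a)
    · intro a _; exact Finset.mem_univ _
    · intro a _; exact ZMod.natCast_zmod_val a
    · intro a ha; exact ZMod.val_natCast_of_lt (Finset.mem_range.mp ha)
    · intro a _; rw [ZMod.natCast_zmod_val]
  -- j = 0 case via total sum
  have hw0 : w ((0:ℕ) : ZMod (2*m)) + w (((0:ℕ) : ZMod (2*m)) + (m : ZMod (2*m))) = 0 := by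
    have hS2 : ((S : ℤ) : ZMod 2) = ∑ k : ZMod (2*m), w k := by
      rw [hS]
      push_cast
      rw [Finset.sum_comm]
    have hS0 : ((S : ℤ) : ZMod 2) = 0 := by
      have h1 := hone
      push_cast at h1
      rw [sub_eq_zero] at h1
      rw [h1]
      have : (((2*m : ℕ) : ℤ) : ZMod 2) = 0 := by
        rw [ZMod.intCast_zmod_eq_zero_iff_dvd]
        exact ⟨(m:ℤ), by push_cast; ring⟩
      push_cast at this
      exact this
    have hsplit : ∑ k : ZMod (2*m), w k = ∑ r ∈ Finset.range m,
        (w ((r : ℕ) : ZMod (2*m)) + w (((r : ℕ) : ZMod (2*m)) + (m : ZMod (2*m)))) := by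
      rw [hsum_zmod w]
      have hrange : Finset.range (2*m) = Finset.range (m + m) := by rw [two_mul]
      rw [hrange, Finset.sum_range_add, Finset.sum_add_distrib]
      congr 1
      refine Finset.sum_congr rfl (fun r _ => ?_)
      have hc : ((m + r : ℕ) : ZMod (2*m)) = ((r : ℕ) : ZMod (2*m)) + (m : ZMod (2*m)) := by
        push_cast
        ring
      rw [hc]
    have hsingle : ∑ r ∈ Finset.range m,
        (w ((r : ℕ) : ZMod (2*m)) + w (((r : ℕ) : ZMod (2*m)) + (m : ZMod (2*m))))
        = w ((0:ℕ) : ZMod (2*m)) + w (((0:ℕ) : ZMod (2*m)) + (m : ZMod (2*m))) := by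
      refine Finset.sum_eq_single_of_mem 0 (Finset.mem_range.mpr hm) ?_
      intro r hr hne
      exact hwj r (Nat.one_le_iff_ne_zero.mpr hne) (Finset.mem_range.mp hr)
    rw [← hsingle, ← hsplit, ← hS2, hS0]
  -- final step
  intro j hj
  have hwsum : w ((j:ℕ) : ZMod (2*m)) + w (((j:ℕ) : ZMod (2*m)) + (m : ZMod (2*m))) = 0 := by
    rcases Nat.eq_zero_or_pos j with rfl | hj1
    · exact hw0
    · exact hwj j hj1 hj
  have hWc : (((∑ i : Fin 4, (B i ((j:ℕ) : ZMod (2*m))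
      + B i (((j:ℕ) : ZMod (2*m)) + (m : ZMod (2*m))))) : ℤ) : ZMod 2) = 0 := by
    push_cast
    rw [Finset.sum_add_distrib]
    exact hwsum
  have hdvd2 : (2:ℤ) ∣ ∑ i : Fin 4, (B i ((j:ℕ) : ZMod (2*m))
      + B i (((j:ℕ) : ZMod (2*m)) + (m : ZMod (2*m)))) := by
    exact_mod_cast (ZMod.intCast_zmod_eq_zero_iff_dvd _ 2).mp hWc
  obtain ⟨t, ht⟩ := hdvd2
  have hexp : ∑ i : Fin 4, (v i ((j:ℕ) : ZMod (2*m))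
      + v i (((j:ℕ) : ZMod (2*m)) + (m : ZMod (2*m))))
      = 8 - 2 * ∑ i : Fin 4, (B i ((j:ℕ) : ZMod (2*m))
        + B i (((j:ℕ) : ZMod (2*m)) + (m : ZMod (2*m)))) := by
    have hterm : ∀ i : Fin 4, v i ((j:ℕ) : ZMod (2*m))
        + v i (((j:ℕ) : ZMod (2*m)) + (m : ZMod (2*m)))
        = 2 - 2 * (B i ((j:ℕ) : ZMod (2*m)) + B i (((j:ℕ) : ZMod (2*m)) + (m : ZMod (2*m)))) := by
      intro i
      rw [hvB i ((j:ℕ) : ZMod (2*m)), hvB i (((j:ℕ) : ZMod (2*m)) + (m : ZMod (2*m)))]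
      ring
    rw [Finset.sum_congr rfl (fun i _ => hterm i), Finset.sum_sub_distrib, ← Finset.mul_sum]
    norm_num
  rw [hexp, ht]
  exact ⟨2 - t, by ring⟩

theorem williamson_two_compression_mod_four (n m : ℕ) (hn : n = 2 * m) (a b c d : ℕ → ℤ)
    (hW : IsWilliamson n a b c d) :
    ∀ j < m, (4 : ℤ) ∣
      ((a j + a (j + m)) + (b j + b (j + m)) + (c j + c (j + m)) + (d j + d (j + m))) := by
  intro j hj
  have hm : 0 < m := by omega
  subst hn
  haveI : NeZero (2*m) := ⟨by omega⟩
  obtain ⟨sa, sb, sc, sd, pa, pb, pc, pd, hpaf⟩ := hW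
  -- symmetric extension to ZMod
  have hsymm : ∀ (x : ℕ → ℤ), SymmSeq (2*m) x →
      ∀ k : ZMod (2*m), x ((-k).val) = x k.val := by
    intro x hx k
    by_cases hk : k = 0
    · subst hk; simp
    · haveI : NeZero k := ⟨hk⟩
      rw [ZMod.val_neg_of_ne_zero k]
      have h1 : 1 ≤ k.val := by
        have := (ZMod.val_eq_zero k).not.mpr hk
        omega
      exact (hx k.val h1 (ZMod.val_lt k)).symm
  -- paf to ZMod sums
  have hpafz : ∀ (x : ℕ → ℤ) (s : ℕ), paf (2*m) x s =
      ∑ k : ZMod (2*m), x k.val * x ((k + (s : ZMod (2*m))).val) := by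
    intro x s
    rw [paf]
    refine Finset.sum_nbij' (fun r => ((r:ℕ) : ZMod (2*m))) (fun k => k.val) ?_ ?_ ?_ ?_ ?_
    · intro r _; exact Finset.mem_univ _
    · intro k _; exact Finset.mem_range.mpr (ZMod.val_lt k)
    · intro r hr; exact ZMod.val_natCast_of_lt (Finset.mem_range.mp hr)
    · intro k _; exact ZMod.natCast_zmod_val k
    · intro r hr
      have e1 : ((r:ℕ) : ZMod (2*m)).val = r := ZMod.val_natCast_of_lt (Finset.mem_range.mp hr)
      have e2 : (((r:ℕ) : ZMod (2*m)) + ((s:ℕ) : ZMod (2*m))).val = (r + s) % (2*m) := by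
        rw [← Nat.cast_add, ZMod.val_natCast]
      rw [e1, e2]
  set v : Fin 4 → ZMod (2*m) → ℤ :=
    ![fun k => a k.val, fun k => b k.val, fun k => c k.val, fun k => d k.val] with hv
  have hpm : ∀ i k, v i k = 1 ∨ v i k = -1 := by
    intro i k
    fin_cases i
    · exact pa k.val (ZMod.val_lt k)
    · exact pb k.val (ZMod.val_lt k)
    · exact pc k.val (ZMod.val_lt k)
    · exact pd k.val (ZMod.val_lt k)
  have hsym : ∀ i k, v i (-k) = v i k := by
    intro i k
    fin_cases i
    · exact hsymm a sa k
    · exact hsymm b sb k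
    · exact hsymm c sc k
    · exact hsymm d sd k
  have hp4 : ∀ s : ℕ, 1 ≤ s → s ≤ m →
      ∑ i : Fin 4, ∑ k : ZMod (2*m), v i k * v i (k + (s : ZMod (2*m))) = 0 := by
    intro s h1 h2
    have h0 := hpaf s h1 (by omega)
    rw [hpafz a s, hpafz b s, hpafz c s, hpafz d s] at h0
    rw [Fin.sum_univ_four]
    exact h0
  have hkey := key m hm v hpm hsym hp4 j hj
  rw [Fin.sum_univ_four] at hkey
  have e1 : ((j:ℕ) : ZMod (2*m)).val = j := ZMod.val_natCast_of_lt (by omega)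
  have e2 : (((j:ℕ) : ZMod (2*m)) + (m : ZMod (2*m))).val = j + m := by
    rw [← Nat.cast_add, ZMod.val_natCast_of_lt (by omega)]
  simp only [hv, Matrix.cons_val_zero, Matrix.cons_val_one, Matrix.head_cons,
    Matrix.cons_val_two, Matrix.tail_cons, Matrix.cons_val_three, e1, e2] at hkey
  exact hkey
end

section
/- Let A and B be sequences of length n with entries in the integers, and let A ж B denote their interleaving, a sequence of length 2n. Then for every integer s, PAF_{A ж B}(2s) = PAF_A(s) + PAF_B(s), where the PAF of A ж B is computed with period 2n and the PAFs of A and B are computed with period n. -/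
/-- The periodic autocorrelation function of the length-`n` integer sequence `a`,
with integer argument `s`: `PAF_a(s) = ∑_{k=0}^{n-1} a_k · a_{(k+s) mod n}`. -/
def pafZ (n : ℕ) (a : ℕ → ℤ) (s : ℤ) : ℤ :=
  ∑ k ∈ Finset.range n, a k * a ((((k : ℤ) + s) % (n : ℤ)).toNat)

/-- The interleaving `a ж b` of two length-`n` sequences, of length `2n`:
`[a₀, b₀, a₁, b₁, …]`. -/
def interleave (a b : ℕ → ℤ) (i : ℕ) : ℤ :=
  if i % 2 = 0 then a (i / 2) else b (i / 2)

lemma sum_range_two_mul (n : ℕ) (f : ℕ → ℤ) :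
    ∑ i ∈ Finset.range (2 * n), f i
      = ∑ i ∈ Finset.range n, f (2 * i) + ∑ i ∈ Finset.range n, f (2 * i + 1) := by
  induction n with
  | zero => simp
  | succ m ih =>
    rw [Nat.mul_succ, Finset.sum_range_succ, Finset.sum_range_succ,
      Finset.sum_range_succ, Finset.sum_range_succ, ih]
    ring

lemma odd_emod (x : ℤ) (n : ℕ) (hn : 0 < n) :
    (2 * x + 1) % (2 * (n : ℤ)) = 2 * (x % n) + 1 := by
  have h : 2 * x + 1 = 2 * (x % n) + 1 + (2 * n) * (x / n) := by
    have := Int.emod_add_mul_ediv x n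
    ring_nf
    linarith [Int.emod_add_mul_ediv x n]
  rw [h, Int.add_mul_emod_self_left]
  have h1 : 0 ≤ x % n := Int.emod_nonneg x (by exact_mod_cast hn.ne')
  have h2 : x % n < n := Int.emod_lt_of_pos x (by exact_mod_cast hn)
  exact Int.emod_eq_of_lt (by omega) (by omega)

theorem paf_interleave (n : ℕ) (a b : ℕ → ℤ) (s : ℤ) :
    pafZ (2 * n) (interleave a b) (2 * s) = pafZ n a s + pafZ n b s := by
  rcases Nat.eq_zero_or_pos n with rfl | hn
  · simp [pafZ]
  unfold pafZ
  rw [sum_range_two_mul]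
  congr 1
  · apply Finset.sum_congr rfl
    intro k _
    have h1 : 0 ≤ ((k : ℤ) + s) % n := Int.emod_nonneg _ (by exact_mod_cast hn.ne')
    have key : (((2 * k : ℕ) : ℤ) + 2 * s) % ((2 * n : ℕ) : ℤ)
        = 2 * (((k : ℤ) + s) % n) := by
      push_cast
      rw [show (2 : ℤ) * k + 2 * s = 2 * (k + s) by ring,
        Int.mul_emod_mul_of_pos _ _ (by norm_num)]
    rw [key]
    have : (2 * (((k : ℤ) + s) % n)).toNat = 2 * (((k : ℤ) + s) % n).toNat := by omega
    rw [this]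
    simp [interleave, Nat.mul_div_cancel_left _ (by norm_num : 0 < 2), Nat.mul_mod_right]
  · apply Finset.sum_congr rfl
    intro k _
    have h1 : 0 ≤ ((k : ℤ) + s) % n := Int.emod_nonneg _ (by exact_mod_cast hn.ne')
    have key : (((2 * k + 1 : ℕ) : ℤ) + 2 * s) % ((2 * n : ℤ))
        = 2 * (((k : ℤ) + s) % n) + 1 := by
      push_cast
      rw [show (2 : ℤ) * k + 1 + 2 * s = 2 * (k + s) + 1 by ring,
        odd_emod _ _ hn]
    rw [show ((2 * n : ℕ) : ℤ) = 2 * (n : ℤ) by push_cast; ring, key]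
    have : (2 * (((k : ℤ) + s) % n) + 1).toNat = 2 * (((k : ℤ) + s) % n).toNat + 1 := by omega
    rw [this]
    simp [interleave, Nat.mul_add_mod, Nat.mul_add_div (by norm_num : 0 < 2)]
end

section
/- Let n be even and let A, B, C, D be a Williamson sequence of order n. Define Ã, B̃, C̃, D̃ by negating every second entry of each sequence simultaneously, i.e., x̃_i = (−1)^i · x_i for each of the four sequences. Then Ã, B̃, C̃, D̃ is a Williamson sequence of order n (in particular, each of Ã, B̃, C̃, D̃ is again symmetric). -/
lemma neg_one_pow_mod (n m : ℕ) (hn : Even n) : (-1 : ℤ) ^ (m % n) = (-1) ^ m := by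
  conv_rhs => rw [← Nat.div_add_mod m n]
  rw [pow_add, Even.neg_one_pow (hn.mul_right _), one_mul]

lemma alt_symm (n : ℕ) (hn : Even n) (a : ℕ → ℤ) (h : SymmSeq n a) :
    SymmSeq n (fun i => (-1 : ℤ) ^ i * a i) := by
  intro i h1 h2
  simp only
  rw [← h i h1 h2]
  congr 1
  have key : (-1 : ℤ) ^ (n - i) * (-1) ^ i = 1 := by
    rw [← pow_add, Nat.sub_add_cancel h2.le, hn.neg_one_pow]
  have sq : (-1 : ℤ) ^ i * (-1) ^ i = 1 := by
    rw [← pow_add, Even.neg_one_pow ⟨i, rfl⟩]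
  calc (-1 : ℤ) ^ i = (-1) ^ i * ((-1) ^ (n - i) * (-1) ^ i) := by rw [key, mul_one]
    _ = (-1) ^ (n - i) * ((-1) ^ i * (-1) ^ i) := by ring
    _ = (-1) ^ (n - i) := by rw [sq, mul_one]

lemma alt_pmone (n : ℕ) (a : ℕ → ℤ) (h : PMOne n a) :
    PMOne n (fun i => (-1 : ℤ) ^ i * a i) := by
  intro i hi
  simp only
  rcases Nat.even_or_odd i with he | ho
  · rw [he.neg_one_pow, one_mul]; exact h i hi
  · rw [ho.neg_one_pow, neg_one_mul]
    rcases h i hi with h' | h'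
    · right; rw [h']
    · left; rw [h', neg_neg]

lemma alt_paf (n : ℕ) (hn : Even n) (a : ℕ → ℤ) (s : ℕ) :
    paf n (fun i => (-1 : ℤ) ^ i * a i) s = (-1) ^ s * paf n a s := by
  unfold paf
  rw [Finset.mul_sum]
  refine Finset.sum_congr rfl fun k _ => ?_
  simp only
  rw [neg_one_pow_mod n (k + s) hn, pow_add]
  have sq : (-1 : ℤ) ^ k * (-1) ^ k = 1 := by
    rw [← pow_add, Even.neg_one_pow ⟨k, rfl⟩]
  calc (-1 : ℤ) ^ k * a k * ((-1) ^ k * (-1) ^ s * a ((k + s) % n))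
      = ((-1) ^ k * (-1) ^ k) * ((-1) ^ s * (a k * a ((k + s) % n))) := by ring
    _ = (-1) ^ s * (a k * a ((k + s) % n)) := by rw [sq, one_mul]

theorem williamson_alternating_negation (n : ℕ) (heven : Even n) (a b c d : ℕ → ℤ)
    (hW : IsWilliamson n a b c d) :
    IsWilliamson n
      (fun i => (-1 : ℤ) ^ i * a i) (fun i => (-1 : ℤ) ^ i * b i)
      (fun i => (-1 : ℤ) ^ i * c i) (fun i => (-1 : ℤ) ^ i * d i) := by
  obtain ⟨sa, sb, sc, sd, pa, pb, pc, pd, hpaf⟩ := hW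
  refine ⟨alt_symm n heven a sa, alt_symm n heven b sb, alt_symm n heven c sc,
    alt_symm n heven d sd, alt_pmone n a pa, alt_pmone n b pb, alt_pmone n c pc,
    alt_pmone n d pd, fun s h1 h2 => ?_⟩
  rw [alt_paf n heven a s, alt_paf n heven b s, alt_paf n heven c s, alt_paf n heven d s,
    ← mul_add, ← mul_add, ← mul_add, hpaf s h1 h2, mul_zero]
end

section
/- Let A, B, C, D be a Williamson sequence of order n and let k be an integer coprime to n. Define σ(i) = k·i mod n and let σ(X) denote the sequence whose i-th entry is x_{σ(i)}. Then σ(A), σ(B), σ(C), σ(D) is a Williamson sequence of order n (in particular, each sequence σ(X) is again symmetric). -/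
lemma paf_eq_zmod (n : ℕ) [NeZero n] (a : ℕ → ℤ) (s : ℕ) :
    paf n a s = ∑ x : ZMod n, a x.val * a ((x + (s : ZMod n)).val) := by
  unfold paf
  refine Finset.sum_nbij' (fun i => (i : ZMod n)) (fun x => x.val) ?_ ?_ ?_ ?_ ?_
  · intro i _; exact Finset.mem_univ _
  · intro x _; exact Finset.mem_range.2 (ZMod.val_lt x)
  · intro i hi; exact ZMod.val_natCast_of_lt (Finset.mem_range.1 hi)
  · intro x _; exact ZMod.natCast_rightInverse x
  · intro i hi
    rw [ZMod.val_natCast_of_lt (Finset.mem_range.1 hi), ← Nat.cast_add, ZMod.val_natCast]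

lemma paf_congr_zmod (n : ℕ) (hn : 0 < n) (a : ℕ → ℤ) (s t : ℕ)
    (h : (s : ZMod n) = (t : ZMod n)) : paf n a s = paf n a t := by
  haveI : NeZero n := ⟨hn.ne'⟩
  rw [paf_eq_zmod, paf_eq_zmod, h]

lemma paf_comp (n : ℕ) (hn : 0 < n) (a : ℕ → ℤ) (k : ℕ) (hk : Nat.Coprime k n) (s : ℕ) :
    paf n (fun i => a (k * i % n)) s = paf n a (k * s % n) := by
  haveI : NeZero n := ⟨hn.ne'⟩
  rw [paf_eq_zmod, paf_eq_zmod]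
  have key : ∀ x : ZMod n, a (k * x.val % n) = a (((k : ZMod n) * x).val) := by
    intro x
    congr 1
    conv_rhs => rw [show (k : ZMod n) * x = ((k * x.val : ℕ) : ZMod n) by
      push_cast [ZMod.natCast_val, ZMod.cast_id]; ring_nf]
    rw [ZMod.val_natCast]
  have key2 : ∀ x : ZMod n, ((x + (k * s % n : ℕ) : ZMod n)).val
      = ((x + (k : ZMod n) * (s : ZMod n))).val := by
    intro x
    congr 1
    rw [ZMod.natCast_mod]
    push_cast
    ring_nf
  let u : (ZMod n)ˣ := ZMod.unitOfCoprime k hk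
  have hu : (u : ZMod n) = (k : ZMod n) := rfl
  calc ∑ x : ZMod n, a (k * x.val % n) * a ((k * ((x + (s:ZMod n)).val) % n))
      = ∑ x : ZMod n, a (((k:ZMod n) * x).val) * a (((k:ZMod n) * x + (k:ZMod n)*(s:ZMod n)).val) := by
        refine Finset.sum_congr rfl fun x _ => ?_
        rw [key x, key ((x + (s:ZMod n)))]
        congr 2
        ring_nf
    _ = ∑ y : ZMod n, a y.val * a ((y + (k:ZMod n)*(s:ZMod n)).val) := by
        refine Fintype.sum_bijective ((u : ZMod n) * ·) (Units.mulLeft_bijective u) _ _ fun x => ?_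
        rw [hu]
    _ = ∑ y : ZMod n, a y.val * a ((y + ((k * s % n : ℕ) : ZMod n)).val) := by
        refine Finset.sum_congr rfl fun y _ => ?_
        rw [key2]

lemma paf_neg (n : ℕ) (hn : 0 < n) (a : ℕ → ℤ) (s t : ℕ)
    (h : (t : ZMod n) = -(s : ZMod n)) : paf n a s = paf n a t := by
  haveI : NeZero n := ⟨hn.ne'⟩
  rw [paf_eq_zmod, paf_eq_zmod, h]
  refine Fintype.sum_bijective (· + (s : ZMod n))
    (Equiv.addRight ((s : ZMod n))).bijective _ _ fun x => ?_
  simp only [add_neg_cancel_right]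
  ring_nf

lemma symm_zmod (n : ℕ) (hn : 0 < n) (a : ℕ → ℤ) (ha : SymmSeq n a) (x : ZMod n) :
    a x.val = a ((-x).val) := by
  haveI : NeZero n := ⟨hn.ne'⟩
  by_cases hx : x = 0
  · subst hx; simp
  · rw [ZMod.neg_val, if_neg hx]
    exact ha x.val (Nat.one_le_iff_ne_zero.2 fun h => hx ((ZMod.val_eq_zero x).1 h)) (ZMod.val_lt x)

lemma symm_comp (n : ℕ) (a : ℕ → ℤ) (ha : SymmSeq n a) (k : ℕ) :
    SymmSeq n (fun i => a (k * i % n)) := by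
  intro i hi1 hin
  have hn : 0 < n := lt_of_le_of_lt (Nat.zero_le i) hin
  haveI : NeZero n := ⟨hn.ne'⟩
  simp only
  have h1 : k * i % n = ((k * i : ℕ) : ZMod n).val := (ZMod.val_natCast n _).symm
  have h2 : k * (n - i) % n = ((-(k * i : ℕ) : ZMod n)).val := by
    rw [show (-(k * i : ℕ) : ZMod n) = ((k * (n - i) : ℕ) : ZMod n) by
      push_cast [Nat.cast_sub hin.le]
      simp [ZMod.natCast_self]]
    rw [ZMod.val_natCast]
  rw [h1, h2]
  exact symm_zmod n hn a ha _

theorem williamson_automorphism (n : ℕ) (a b c d : ℕ → ℤ)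
    (hW : IsWilliamson n a b c d) (k : ℕ) (hk : Nat.Coprime k n) :
    IsWilliamson n
      (fun i => a (k * i % n)) (fun i => b (k * i % n))
      (fun i => c (k * i % n)) (fun i => d (k * i % n)) := by
  obtain ⟨ha, hb, hc, hd, pa, pb, pc, pd, hpaf⟩ := hW
  refine ⟨symm_comp n a ha k, symm_comp n b hb k, symm_comp n c hc k, symm_comp n d hd k,
    ?_, ?_, ?_, ?_, ?_⟩
  · intro i hi; exact pa _ (Nat.mod_lt _ (lt_of_le_of_lt (Nat.zero_le i) hi))
  · intro i hi; exact pb _ (Nat.mod_lt _ (lt_of_le_of_lt (Nat.zero_le i) hi))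
  · intro i hi; exact pc _ (Nat.mod_lt _ (lt_of_le_of_lt (Nat.zero_le i) hi))
  · intro i hi; exact pd _ (Nat.mod_lt _ (lt_of_le_of_lt (Nat.zero_le i) hi))
  · intro s hs1 hs2
    have hn : 0 < n := by omega
    haveI : NeZero n := ⟨hn.ne'⟩
    rw [paf_comp n hn a k hk s, paf_comp n hn b k hk s, paf_comp n hn c k hk s,
      paf_comp n hn d k hk s]
    set t := k * s % n with ht
    have htlt : t < n := Nat.mod_lt _ hn
    have htne : t ≠ 0 := by
      intro h0
      have hd1 : (n : ℕ) ∣ k * s := Nat.dvd_of_mod_eq_zero h0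
      have hd2 := Nat.Coprime.dvd_of_dvd_mul_left (Nat.coprime_comm.1 hk) hd1
      have := Nat.le_of_dvd (by omega) hd2
      omega
    by_cases hle : t ≤ n / 2
    · exact hpaf t (Nat.one_le_iff_ne_zero.2 htne) hle
    · have hneg : ((n - t : ℕ) : ZMod n) = -(t : ZMod n) := by
        push_cast [Nat.cast_sub htlt.le]
        simp [ZMod.natCast_self]
      rw [paf_neg n hn a t (n - t) hneg, paf_neg n hn b t (n - t) hneg,
        paf_neg n hn c t (n - t) hneg, paf_neg n hn d t (n - t) hneg]
      exact hpaf (n - t) (by omega) (by omega)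
end
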